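/- Let G = (V, E) be a 2-vertex connected finite simple graph on at least 3 vertices with diameter D, and for each vertex u let P_u be a partition of the neighborhood Γ(u) of u into nonempty parts. Then the auxiliary graph G̃ associated with G and the partitions (P_u)_{u ∈ V} is connected and has diameter at most 3·D + 2; in particular, for any two vertices u, v that are adjacent in G, the distance between u and v in G̃ is at most 3. -/

import Mathlib

open SimpleGraph

/-- A finite simple graph (on at least 3 vertices) is 2-vertex connected if it is connected
and deleting any single vertex leaves a connected graph. -/
def TwoVertexConnected {V : Type} (G : SimpleGraph V) : Prop :=
  G.Connected ∧ ∀ u : V, (G.induce {v | v ≠ u}).Connected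

/-- `Part` assigns to each vertex `u` a partition of the neighborhood `Γ(u)` of `u`
into nonempty parts. -/
def IsNbrPartition {V : Type} (G : SimpleGraph V) (Part : V → Set (Set V)) : Prop :=
  ∀ u : V,
    (∀ P ∈ Part u, P.Nonempty) ∧
    (⋃₀ Part u = G.neighborSet u) ∧
    (∀ P ∈ Part u, ∀ Q ∈ Part u, P ≠ Q → Disjoint P Q)

/-- The vertices of the auxiliary graph: the original vertices of `V` together with the
virtual copies `(u, P)` for `u ∈ V` and `P ∈ Part u`. -/
def AuxVert {V : Type} (Part : V → Set (Set V)) : Type :=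
  V ⊕ {p : V × Set V // p.2 ∈ Part p.1}

/-- The auxiliary graph associated with `G` and the neighborhood partitions `Part`:
each vertex `u` is joined to each of its virtual copies `(u, P)`, `P ∈ Part u`, and for
every edge `{u, v}` of `G` the virtual copies `(u, P)` and `(v, Q)` are joined, where
`P` is the part of `Part u` containing `v` and `Q` is the part of `Part v` containing `u`. -/
def auxGraph {V : Type} (G : SimpleGraph V) (Part : V → Set (Set V)) :
    SimpleGraph (AuxVert Part) where
  Adj x y :=
    match x, y with
    | Sum.inl u, Sum.inr ⟨(u', _), _⟩ => u = u'
    | Sum.inr ⟨(u', _), _⟩, Sum.inl u => u = u'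
    | Sum.inr ⟨(u, P), _⟩, Sum.inr ⟨(v, Q), _⟩ => G.Adj u v ∧ v ∈ P ∧ u ∈ Q
    | _, _ => False
  symm := by
    refine ⟨?_⟩
    rintro (u | ⟨⟨u, P⟩, hP⟩) (v | ⟨⟨v, Q⟩, hQ⟩) h
    · exact h.elim
    · exact h
    · exact h
    · exact ⟨h.1.symm, h.2.2, h.2.1⟩
  loopless := by
    refine ⟨?_⟩
    rintro (u | ⟨⟨u, P⟩, hP⟩) h
    · exact h.elim
    · exact G.irrefl h.1

lemma aux_walk_of_adj {V : Type} {G : SimpleGraph V} {Part : V → Set (Set V)}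
    (hPart : IsNbrPartition G Part) {u v : V} (h : G.Adj u v) :
    ∃ q : (auxGraph G Part).Walk (Sum.inl u) (Sum.inl v), q.length = 3 := by
  have hv : v ∈ ⋃₀ Part u := by rw [(hPart u).2.1]; exact h
  have hu : u ∈ ⋃₀ Part v := by rw [(hPart v).2.1]; exact h.symm
  obtain ⟨P, hP, hvP⟩ := hv
  obtain ⟨Q, hQ, huQ⟩ := hu
  exact ⟨Walk.cons
      (show (auxGraph G Part).Adj (Sum.inl u) (Sum.inr ⟨(u, P), hP⟩) from rfl)
    (Walk.cons
      (show (auxGraph G Part).Adj (Sum.inr ⟨(u, P), hP⟩) (Sum.inr ⟨(v, Q), hQ⟩) from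
        ⟨h, hvP, huQ⟩)
    (Walk.cons
      (show (auxGraph G Part).Adj (Sum.inr ⟨(v, Q), hQ⟩) (Sum.inl v) from rfl)
      Walk.nil)), rfl⟩

lemma aux_walk_of_walk {V : Type} {G : SimpleGraph V} {Part : V → Set (Set V)}
    (hPart : IsNbrPartition G Part) {u v : V} (p : G.Walk u v) :
    ∃ q : (auxGraph G Part).Walk (Sum.inl u) (Sum.inl v), q.length = 3 * p.length := by
  induction p with
  | nil => exact ⟨Walk.nil, rfl⟩
  | cons h p ih =>
    obtain ⟨q1, hq1⟩ := aux_walk_of_adj hPart h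
    obtain ⟨q2, hq2⟩ := ih
    refine ⟨q1.append q2, ?_⟩
    erw [Walk.length_append, hq1, hq2, Walk.length_cons]
    ring

lemma aux_walk_to_base {V : Type} {G : SimpleGraph V} {Part : V → Set (Set V)}
    (x : AuxVert Part) :
    ∃ (u : V) (q : (auxGraph G Part).Walk x (Sum.inl u)), q.length ≤ 1 := by
  cases x with
  | inl u => exact ⟨u, Walk.nil, Nat.zero_le 1⟩
  | inr p =>
    obtain ⟨⟨u, P⟩, hP⟩ := p
    exact ⟨u, Walk.cons
      (show (auxGraph G Part).Adj (Sum.inr ⟨(u, P), hP⟩) (Sum.inl u) from rfl)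
      Walk.nil, Nat.le_refl 1⟩

/-- The auxiliary graph of a 2-vertex connected graph of diameter `D` (with neighborhood
partitions into nonempty parts) is connected and has diameter at most `3·D + 2`; in
particular, vertices adjacent in `G` are at distance at most `3` in the auxiliary graph. -/
theorem auxGraph_diam {V : Type} [Fintype V] (G : SimpleGraph V) (D : ℕ)
    (hcard : 3 ≤ Fintype.card V) (hG : TwoVertexConnected G) (hD : G.diam = D)
    (Part : V → Set (Set V)) (hPart : IsNbrPartition G Part) :
    (auxGraph G Part).Connected ∧
      (auxGraph G Part).diam ≤ 3 * D + 2 ∧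
      (∀ u v : V, G.Adj u v →
        (auxGraph G Part).dist (Sum.inl u) (Sum.inl v) ≤ 3) := by
  obtain ⟨hGc, -⟩ := hG
  have hne : Nonempty V := hGc.nonempty
  -- connectivity
  have hne' : Nonempty (AuxVert Part) := ⟨Sum.inl (Classical.arbitrary V)⟩
  have hconn : (auxGraph G Part).Connected := by
    refine ⟨fun x y => ?_⟩
    obtain ⟨a, qa, -⟩ := aux_walk_to_base (G := G) x
    obtain ⟨b, qb, -⟩ := aux_walk_to_base (G := G) y
    obtain ⟨p⟩ := hGc a b
    obtain ⟨q, -⟩ := aux_walk_of_walk hPart p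
    exact ⟨(qa.append q).append qb.reverse⟩
  -- G has finite ediam
  have hGtop : G.ediam ≠ ⊤ := by
    obtain ⟨a, b, hab⟩ := exists_edist_eq_ediam_of_finite (G := G)
    obtain ⟨p, hp⟩ := (hGc a b).exists_walk_length_eq_edist
    rw [← hab, ← hp]
    exact (ENat.coe_lt_top _).ne
  -- the distance bound between any two auxiliary vertices
  have key : ∀ x y : AuxVert Part, (auxGraph G Part).dist x y ≤ 3 * D + 2 := by
    intro x y
    obtain ⟨a, qa, ha⟩ := aux_walk_to_base (G := G) x
    obtain ⟨b, qb, hb⟩ := aux_walk_to_base (G := G) y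
    obtain ⟨p, hp⟩ := (hGc a b).exists_walk_length_eq_dist
    obtain ⟨q, hq⟩ := aux_walk_of_walk hPart p
    have hdab : G.dist a b ≤ D := hD ▸ dist_le_diam hGtop
    calc (auxGraph G Part).dist x y ≤ ((qa.append q).append qb.reverse).length :=
          dist_le _
      _ = qa.length + q.length + qb.length := by
          erw [Walk.length_append, Walk.length_append, Walk.length_reverse]
      _ ≤ 1 + 3 * D + 1 := by
          have : q.length ≤ 3 * D := by rw [hq, hp]; omega
          omega
      _ = 3 * D + 2 := by ring
  refine ⟨hconn, ?_, ?_⟩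
  · obtain ⟨x, y, hxy⟩ := exists_dist_eq_diam (G := auxGraph G Part)
    rw [← hxy]; exact key x y
  · intro u v huv
    obtain ⟨q, hq⟩ := aux_walk_of_adj hPart huv
    calc (auxGraph G Part).dist (Sum.inl u) (Sum.inl v) ≤ q.length := dist_le _
      _ = 3 := hq
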